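/- For every k with −2 < k < 2, the level set E_k = {(x,y,z) ∈ [−2,2]³ : κ(x,y,z) = k}, with the subspace topology from ℝ³, is homeomorphic to the standard 2-sphere S² = {v ∈ ℝ³ : |v| = 1}. -/

import Mathlib

/-- `κ(x,y,z) = x² + y² + z² − xyz − 2`. -/
def kappa (p : ℝ × ℝ × ℝ) : ℝ :=
  p.1 ^ 2 + p.2.1 ^ 2 + p.2.2 ^ 2 - p.1 * p.2.1 * p.2.2 - 2

/-- The level set `E_k = {(x,y,z) ∈ [−2,2]³ : κ(x,y,z) = k}`. -/
def Ek (k : ℝ) : Set (ℝ × ℝ × ℝ) :=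
  {p | p.1 ∈ Set.Icc (-2 : ℝ) 2 ∧ p.2.1 ∈ Set.Icc (-2 : ℝ) 2 ∧ p.2.2 ∈ Set.Icc (-2 : ℝ) 2 ∧
    kappa p = k}

/-! Auxiliary lemmas for the proof that `E_k` is homeomorphic to the `2`-sphere.
The key idea: in coordinates `(x, y, w)` with `w = 2z - xy`, the set `E_k` becomes
`{(4 - x²)(4 - y²) - w² = 8 - 4k, |x| ≤ 2, |y| ≤ 2}`, which is strictly star-shaped
about the origin; the radial projection to the unit sphere is a continuous bijection
from a compact space to a Hausdorff space, hence a homeomorphism. -/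

/-- Strict monotonicity of `τ ↦ (4 - aτ)(4 - bτ) - dτ` on the admissible range. -/
lemma ek_key_mono (a b d τ1 τ2 : ℝ) (ha : 0 ≤ a) (hb : 0 ≤ b) (hd : 0 ≤ d)
    (hs : 0 < a + b + d) (h1 : 0 ≤ τ1) (h12 : τ1 < τ2)
    (h2a : a * τ2 ≤ 4) (h2b : b * τ2 ≤ 4) :
    (4 - a*τ2)*(4 - b*τ2) - d*τ2 < (4 - a*τ1)*(4 - b*τ1) - d*τ1 := by
  have hE : 0 < 4*a + 4*b + d - a*b*(τ1 + τ2) := by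
    rcases eq_or_lt_of_le (mul_nonneg ha hb) with h0 | h0
    · nlinarith
    · have hτ2 : 0 < τ2 := lt_of_le_of_lt h1 h12
      have e1 : a*b*τ2 ≤ 4*b := by nlinarith
      have e2 : a*b*τ2 ≤ 4*a := by nlinarith
      have e3 : a*b*τ1 < a*b*τ2 := (mul_lt_mul_iff_right₀ h0).2 h12
      nlinarith
  nlinarith [mul_pos (sub_pos.2 h12) hE]

/-- Uniqueness of the positive crossing time along a ray. -/
lemma ek_t_unique (u0 u1 u2 t1 t2 c : ℝ) (hu : 0 < u0^2 + u1^2 + u2^2)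
    (ht1 : 0 < t1) (ht2 : 0 < t2)
    (hb1a : (t1*u0)^2 ≤ 4) (hb1b : (t1*u1)^2 ≤ 4)
    (hb2a : (t2*u0)^2 ≤ 4) (hb2b : (t2*u1)^2 ≤ 4)
    (he1 : (4 - (t1*u0)^2)*(4 - (t1*u1)^2) - (t1*u2)^2 = c)
    (he2 : (4 - (t2*u0)^2)*(4 - (t2*u1)^2) - (t2*u2)^2 = c) : t1 = t2 := by
  have sq_lt : ∀ s r : ℝ, 0 < s → s < r → s^2 < r^2 := fun s r hs hr => by nlinarith
  rcases lt_trichotomy t1 t2 with h | h | h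
  · exfalso
    have := ek_key_mono (u0^2) (u1^2) (u2^2) (t1^2) (t2^2) (sq_nonneg _) (sq_nonneg _)
      (sq_nonneg _) hu (sq_nonneg _) (sq_lt _ _ ht1 h) (by nlinarith) (by nlinarith)
    nlinarith
  · exact h
  · exfalso
    have := ek_key_mono (u0^2) (u1^2) (u2^2) (t2^2) (t1^2) (sq_nonneg _) (sq_nonneg _)
      (sq_nonneg _) hu (sq_nonneg _) (sq_lt _ _ ht2 h) (by nlinarith) (by nlinarith)
    nlinarith

/-- Existence of a positive crossing time along a ray, for a unit direction. -/
lemma ek_t_exists (u0 u1 u2 c : ℝ) (hu : u0^2 + u1^2 + u2^2 = 1)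
    (hc0 : 0 < c) (hc16 : c < 16) :
    ∃ t, 0 < t ∧ (t*u0)^2 ≤ 4 ∧ (t*u1)^2 ≤ 4 ∧
      (4 - (t*u0)^2)*(4 - (t*u1)^2) - (t*u2)^2 = c := by
  have hcont : Continuous (fun t : ℝ => (4 - (t*u0)^2)*(4 - (t*u1)^2) - (t*u2)^2) := by
    fun_prop
  have hm0 : (0:ℝ) ≤ max (u0^2) (u1^2) := le_trans (sq_nonneg u0) (le_max_left _ _)
  rcases hm0.eq_or_lt with h0 | h0
  · have h1 : u0 = 0 := by
      have : u0^2 = 0 := le_antisymm (h0 ▸ le_max_left _ _) (sq_nonneg _)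
      exact pow_eq_zero_iff (n := 2) (by norm_num) |>.1 this
    have h2 : u1 = 0 := by
      have : u1^2 = 0 := le_antisymm (h0 ▸ le_max_right _ _) (sq_nonneg _)
      exact pow_eq_zero_iff (n := 2) (by norm_num) |>.1 this
    have h3 : u2^2 = 1 := by rw [h1, h2] at hu; linarith
    refine ⟨Real.sqrt (16 - c), Real.sqrt_pos.2 (by linarith), by simp [h1], by simp [h2], ?_⟩
    rw [h1, h2]
    simp only [mul_zero, mul_pow, Real.sq_sqrt (by linarith : (0:ℝ) ≤ 16 - c), h3]
    ring
  · set m := max (u0^2) (u1^2) with hm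
    set T := 2 / Real.sqrt m with hT
    have hsm : 0 < Real.sqrt m := Real.sqrt_pos.2 h0
    have hTpos : 0 < T := by positivity
    have hT2 : T^2 = 4/m := by
      rw [hT, div_pow, Real.sq_sqrt hm0]; norm_num
    have hψT : (4 - (T*u0)^2)*(4 - (T*u1)^2) - (T*u2)^2 ≤ 0 := by
      have hzero : (4 - (T*u0)^2)*(4 - (T*u1)^2) = 0 := by
        rcases max_choice (u0^2) (u1^2) with hc | hc
        · have h4 : (T*u0)^2 = 4 := by
            rw [mul_pow, hT2, show m = u0^2 from hm.trans hc]
            field_simp [(hm.trans hc ▸ h0 : (0:ℝ) < u0^2).ne']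
            exact div_self (pow_ne_zero_iff two_ne_zero |>.1 (hm.trans hc ▸ h0 : (0:ℝ) < u0^2).ne')
          rw [h4]; ring
        · have h4 : (T*u1)^2 = 4 := by
            rw [mul_pow, hT2, show m = u1^2 from hm.trans hc]
            field_simp [(hm.trans hc ▸ h0 : (0:ℝ) < u1^2).ne']
            exact div_self (pow_ne_zero_iff two_ne_zero |>.1 (hm.trans hc ▸ h0 : (0:ℝ) < u1^2).ne')
          rw [h4]; ring
      rw [hzero]
      nlinarith [sq_nonneg (T*u2)]
    have hsub := intermediate_value_Icc' hTpos.le hcont.continuousOn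
    obtain ⟨t, ⟨ht0, htT⟩, hte⟩ := hsub ⟨by simpa using hψT.trans hc0.le, by norm_num; linarith⟩
    have htpos : 0 < t := by
      rcases ht0.eq_or_lt with rfl | h
      · exfalso; norm_num at hte; linarith
      · exact h
    have ht2 : t^2 * m ≤ 4 := by
      have : t^2 ≤ T^2 := by nlinarith
      rw [hT2] at this
      exact (le_div_iff₀ h0).1 this
    have hb0 : (t*u0)^2 ≤ 4 := by
      rw [mul_pow]
      nlinarith [le_max_left (u0^2) (u1^2), sq_nonneg t]
    have hb1 : (t*u1)^2 ≤ 4 := by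
      rw [mul_pow]
      nlinarith [le_max_right (u0^2) (u1^2), sq_nonneg t]
    exact ⟨t, htpos, hb0, hb1, hte⟩

/-- On the level surface with `|x|, |y| ≤ 2` and `k < 2`, automatically `z² ≤ 4`. -/
lemma ek_zbound (x y z k : ℝ) (hx : x^2 ≤ 4) (hy : y^2 ≤ 4) (hk : k < 2)
    (h : x^2 + y^2 + z^2 - x*y*z - 2 = k) : z^2 ≤ 4 := by
  nlinarith [sq_nonneg (x-y), sq_nonneg (x+y), sq_nonneg (z-2), sq_nonneg (z+2),
    mul_nonneg (sub_nonneg.2 hx) (sub_nonneg.2 hy), sq_nonneg (x*y - 2*z)]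

/-- The coordinate change `(x, y, z) ↦ (x, y, 2z - xy)`, viewed in Euclidean space. -/
noncomputable def ekVmap (p : ℝ × ℝ × ℝ) : EuclideanSpace ℝ (Fin 3) :=
  (WithLp.equiv 2 (Fin 3 → ℝ)).symm ![p.1, p.2.1, 2*p.2.2 - p.1*p.2.1]

lemma ekVmap_cont : Continuous ekVmap := by
  apply (PiLp.continuous_toLp 2 (fun _ : Fin 3 => ℝ)).comp
  apply continuous_pi
  intro i
  fin_cases i <;> simp <;> fun_prop

lemma ekVmap_norm (p : ℝ × ℝ × ℝ) :
    ‖ekVmap p‖ = Real.sqrt (p.1^2 + p.2.1^2 + (2*p.2.2 - p.1*p.2.1)^2) := by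
  rw [EuclideanSpace.norm_eq]
  congr 1
  simp [Fin.sum_univ_three, ekVmap, Real.norm_eq_abs, sq_abs]

set_option maxHeartbeats 2000000 in
/-- For `−2 < k < 2`, the level set `E_k`, with the subspace topology from `ℝ³`, is
homeomorphic to the standard `2`-sphere. -/
theorem Ek_homeomorphic_sphere (k : ℝ) (hk₁ : -2 < k) (hk₂ : k < 2) :
    Nonempty (Ek k ≃ₜ Metric.sphere (0 : EuclideanSpace ℝ (Fin 3)) 1) := by
  set c : ℝ := 8 - 4 * k with hc
  have hc0 : 0 < c := by rw [hc]; linarith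
  have hc16 : c < 16 := by rw [hc]; linarith
  -- the equation in the new coordinates
  have hkiff : ∀ p : ℝ × ℝ × ℝ, kappa p = k ↔
      (4 - p.1^2) * (4 - p.2.1^2) - (2*p.2.2 - p.1*p.2.1)^2 = c := by
    intro p
    unfold kappa
    rw [hc]
    constructor <;> intro h
    · linear_combination (-4 : ℝ) * h
    · linear_combination (-1/4 : ℝ) * h
  -- the image vector is nonzero on `E_k`
  have hpos : ∀ p ∈ Ek k, 0 < p.1^2 + p.2.1^2 + (2*p.2.2 - p.1*p.2.1)^2 := by
    intro p hp
    have hsq : (0:ℝ) ≤ p.1^2 + p.2.1^2 + (2*p.2.2 - p.1*p.2.1)^2 := by positivity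
    rcases hsq.eq_or_lt with h | h
    · exfalso
      have hx2 : p.1^2 = 0 := by nlinarith [sq_nonneg p.2.1, sq_nonneg (2*p.2.2 - p.1*p.2.1)]
      have hy2 : p.2.1^2 = 0 := by nlinarith [sq_nonneg p.1, sq_nonneg (2*p.2.2 - p.1*p.2.1)]
      have hw2 : (2*p.2.2 - p.1*p.2.1)^2 = 0 := by nlinarith [sq_nonneg p.1, sq_nonneg p.2.1]
      have hx := pow_eq_zero_iff (n := 2) (by norm_num) |>.1 hx2
      have hy := pow_eq_zero_iff (n := 2) (by norm_num) |>.1 hy2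
      have hw := pow_eq_zero_iff (n := 2) (by norm_num) |>.1 hw2
      have hkap := hp.2.2.2
      unfold kappa at hkap
      rw [hx, hy] at hkap hw
      have hz : p.2.2 = 0 := by nlinarith [hw]
      rw [hz] at hkap
      norm_num at hkap
      linarith
    · exact h
  have hnormpos : ∀ p ∈ Ek k, 0 < ‖ekVmap p‖ := fun p hp => by
    rw [ekVmap_norm]; exact Real.sqrt_pos.2 (hpos p hp)
  have hsqb : ∀ p ∈ Ek k, p.1^2 ≤ 4 ∧ p.2.1^2 ≤ 4 := fun p hp =>
    ⟨by nlinarith [hp.1.1, hp.1.2], by nlinarith [hp.2.1.1, hp.2.1.2]⟩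
  -- the radial projection
  let F : Ek k → Metric.sphere (0 : EuclideanSpace ℝ (Fin 3)) 1 := fun q =>
    ⟨‖ekVmap q.1‖⁻¹ • ekVmap q.1, by
      rw [mem_sphere_zero_iff_norm]
      exact norm_smul_inv_norm (norm_pos_iff.1 (hnormpos q.1 q.2))⟩
  have hFcont : Continuous F := by
    apply Continuous.subtype_mk
    have h1 : Continuous fun q : Ek k => ekVmap q.1 := ekVmap_cont.comp continuous_subtype_val
    exact (h1.norm.inv₀ fun q => (hnormpos q.1 q.2).ne').smul h1
  -- injectivity
  have hinj : Function.Injective F := by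
    rintro ⟨p, hp⟩ ⟨q, hq⟩ hFeq
    have heq : ‖ekVmap p‖⁻¹ • ekVmap p = ‖ekVmap q‖⁻¹ • ekVmap q :=
      congrArg Subtype.val hFeq
    set np := ‖ekVmap p‖ with hnpd
    set nq := ‖ekVmap q‖ with hnqd
    have hnp : 0 < np := hnormpos p hp
    have hnq : 0 < nq := hnormpos q hq
    have h0 : np⁻¹ * p.1 = nq⁻¹ * q.1 := congrArg (fun v => v 0) heq
    have h1 : np⁻¹ * p.2.1 = nq⁻¹ * q.2.1 := congrArg (fun v => v 1) heq
    have h2 : np⁻¹ * (2*p.2.2 - p.1*p.2.1) = nq⁻¹ * (2*q.2.2 - q.1*q.2.1) := congrArg (fun v => v 2) heq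
    set r := nq / np with hr
    have hrpos : 0 < r := div_pos hnq hnp
    have key : ∀ u v : ℝ, np⁻¹ * u = nq⁻¹ * v → v = r * u := by
      intro u v h
      rw [hr]
      field_simp at h ⊢
      linear_combination -h
    have hx := key _ _ h0
    have hy := key _ _ h1
    have hw := key _ _ h2
    have hep : (4 - p.1^2) * (4 - p.2.1^2) - (2*p.2.2 - p.1*p.2.1)^2 = c :=
      (hkiff p).1 hp.2.2.2
    have heq2 : (4 - q.1^2) * (4 - q.2.1^2) - (2*q.2.2 - q.1*q.2.1)^2 = c :=
      (hkiff q).1 hq.2.2.2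
    have ht := ek_t_unique p.1 p.2.1 (2*p.2.2 - p.1*p.2.1) 1 r c (hpos p hp) one_pos hrpos
      (by rw [one_mul]; exact (hsqb p hp).1) (by rw [one_mul]; exact (hsqb p hp).2)
      (by rw [← hx]; exact (hsqb q hq).1) (by rw [← hy]; exact (hsqb q hq).2)
      (by simpa using hep) (by rw [← hx, ← hy, ← hw]; exact heq2)
    -- ht : 1 = r
    have hx1 : q.1 = p.1 := by rw [hx, ← ht, one_mul]
    have hy1 : q.2.1 = p.2.1 := by rw [hy, ← ht, one_mul]
    have hw1 : 2*q.2.2 - q.1*q.2.1 = 2*p.2.2 - p.1*p.2.1 := by rw [hw, ← ht, one_mul]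
    have hz1 : q.2.2 = p.2.2 := by
      rw [hx1, hy1] at hw1; linarith
    apply Subtype.ext
    exact (Prod.ext hx1 (Prod.ext hy1 hz1)).symm
  -- surjectivity
  have hsurj : Function.Surjective F := by
    rintro ⟨u, hu⟩
    rw [mem_sphere_zero_iff_norm] at hu
    have husq : (u 0)^2 + (u 1)^2 + (u 2)^2 = 1 := by
      rw [EuclideanSpace.norm_eq, Real.sqrt_eq_one] at hu
      simpa [Fin.sum_univ_three, Real.norm_eq_abs, sq_abs] using hu
    obtain ⟨t, htpos, hb0, hb1, he⟩ := ek_t_exists (u 0) (u 1) (u 2) c husq hc0 hc16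
    set p : ℝ × ℝ × ℝ := (t * u 0, t * u 1, (t * u 2 + (t * u 0) * (t * u 1))/2) with hpdef
    have hw : 2*p.2.2 - p.1*p.2.1 = t * u 2 := by rw [hpdef]; ring
    have hkp : kappa p = k := by
      rw [hkiff, hw]
      exact he
    have hxb : p.1^2 ≤ 4 := hb0
    have hyb : p.2.1^2 ≤ 4 := hb1
    have hzb : p.2.2^2 ≤ 4 := by
      apply ek_zbound p.1 p.2.1 p.2.2 k hxb hyb hk₂
      unfold kappa at hkp
      linarith [hkp]
    have hp : p ∈ Ek k :=
      ⟨⟨by nlinarith, by nlinarith⟩, ⟨by nlinarith, by nlinarith⟩,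
        ⟨by nlinarith, by nlinarith⟩, hkp⟩
    have hvm : ekVmap p = t • u := by
      apply PiLp.ext
      intro i
      fin_cases i
      · rfl
      · rfl
      · show 2*p.2.2 - p.1*p.2.1 = t * u 2
        rw [hw]
    have hnorm : ‖ekVmap p‖ = t := by
      rw [hvm, norm_smul, hu, mul_one, Real.norm_eq_abs, abs_of_pos htpos]
    refine ⟨⟨p, hp⟩, ?_⟩
    apply Subtype.ext
    show ‖ekVmap p‖⁻¹ • ekVmap p = u
    rw [hnorm, hvm, smul_smul, inv_mul_cancel₀ htpos.ne', one_smul]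
  -- compactness
  have hcompact : IsCompact (Ek k) := by
    have hbox : IsCompact ((Set.Icc (-2:ℝ) 2) ×ˢ ((Set.Icc (-2:ℝ) 2) ×ˢ (Set.Icc (-2:ℝ) 2))) :=
      isCompact_Icc.prod (isCompact_Icc.prod isCompact_Icc)
    apply hbox.of_isClosed_subset
    · have h1 : IsClosed {p : ℝ × ℝ × ℝ | kappa p = k} :=
        isClosed_eq (by unfold kappa; fun_prop) continuous_const
      have h2 : Ek k = ((Set.Icc (-2:ℝ) 2) ×ˢ ((Set.Icc (-2:ℝ) 2) ×ˢ (Set.Icc (-2:ℝ) 2))) ∩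
          {p : ℝ × ℝ × ℝ | kappa p = k} := by
        ext q
        simp only [Ek, Set.mem_setOf_eq, Set.mem_inter_iff, Set.mem_prod]
        tauto
      rw [h2]
      exact ((isClosed_Icc.prod (isClosed_Icc.prod isClosed_Icc)).inter h1)
    · intro q hq
      exact Set.mem_prod.2 ⟨hq.1, Set.mem_prod.2 ⟨hq.2.1, hq.2.2.1⟩⟩
  haveI : CompactSpace (Ek k) := isCompact_iff_compactSpace.1 hcompact
  exact ⟨Continuous.homeoOfEquivCompactToT2 (f := Equiv.ofBijective F ⟨hinj, hsurj⟩) hFcont⟩
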